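/- Let T be a topological space and S : T → Set ℝ^d. If S is μ-continuous in the sense that for every t there is a topology τ̄ finer than the topology of T such that the image closure of S is both inner and outer semicontinuous with respect to τ̄ on a τ̄-neighborhood of t, and every relatively τ̄-open subset of that neighborhood contains a subset of positive μ-measure, then every continuous function y : T → ℝ^d with y t ∈ S t for μ-almost every t satisfies y t ∈ closure(S t) for all t. -/

import Mathlib

open MeasureTheory

/-- The liminf of a set-valued mapping at `t`, with respect to the topology `τ'` on `T`. -/
def lsLimInf {T X : Type*} (τ' : TopologicalSpace T) [TopologicalSpace X]
    (S : T → Set X) (t : T) : Set X :=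
  {x | ∀ A : Set X, IsOpen A → x ∈ A → {t' | (S t' ∩ A).Nonempty} ∈ @nhds T τ' t}

/-- The limsup of a set-valued mapping at `t`, with respect to the topology `τ'` on `T`. -/
def lsLimSup {T X : Type*} (τ' : TopologicalSpace T) [TopologicalSpace X]
    (S : T → Set X) (t : T) : Set X :=
  {x | ∀ A : Set X, IsOpen A → x ∈ A →
    ∀ N ∈ @nhds T τ' t, (N ∩ {t' | (S t' ∩ A).Nonempty}).Nonempty}


private lemma key_open {T : Type*} (τ' : TopologicalSpace T) {N V : Set T} {t : T}
    (hN : N ∈ @nhds T τ' t) (hV : @IsOpen T τ' V) (htV : t ∈ V) :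
    ∃ U : Set T, @IsOpen T τ' U ∧ t ∈ U ∧ U ⊆ N ∧ U ⊆ V := by
  letI := τ'
  exact ⟨interior N ∩ V, isOpen_interior.inter hV,
    ⟨mem_interior_iff_mem_nhds.2 hN, htV⟩,
    fun x hx => interior_subset hx.1, fun x hx => hx.2⟩

theorem mu_continuous_selection {d : ℕ} {T : Type*} [τ : TopologicalSpace T]
    [MeasurableSpace T] (μ : Measure T) (S : T → Set (Fin d → ℝ))
    (hcont : ∀ t : T, ∃ τ' : TopologicalSpace T, τ' ≤ τ ∧
      ∃ O ∈ @nhds T τ' t,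
        (∀ U : Set T, @IsOpen T τ' U → (U ∩ O).Nonempty → 0 < μ (U ∩ O)) ∧
        (∀ t' ∈ O,
          closure (S t') ⊆ lsLimInf τ' (fun s => closure (S s)) t' ∧
          lsLimSup τ' (fun s => closure (S s)) t' ⊆ closure (S t')))
    (y : T → Fin d → ℝ) (hy : Continuous y)
    (hsel : ∀ᵐ t ∂μ, y t ∈ S t) :
    ∀ t, y t ∈ closure (S t) := by
  intro t
  have hyopen : ∀ A : Set (Fin d → ℝ), IsOpen A → IsOpen (y ⁻¹' A) := fun A hA =>
    hA.preimage hy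
  obtain ⟨τ', hle, O, hO, hpos, hsc⟩ := hcont t
  have htO : t ∈ O := mem_of_mem_nhds hO
  apply (hsc t htO).2
  intro A hA hyA N hN
  have hyA' : @IsOpen T τ' (y ⁻¹' A) := hle _ (hyopen A hA)
  obtain ⟨U, hUopen, htU, hUN, hUA⟩ := key_open τ' hN hyA' hyA
  have hne : (U ∩ O).Nonempty := ⟨t, htU, htO⟩
  have hμ := hpos U hUopen hne
  have hz : (μ {t' | y t' ∉ S t'}) = 0 := hsel
  have hmeet : ((U ∩ O) ∩ {t' | y t' ∈ S t'}).Nonempty := by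
    by_contra h
    rw [Set.not_nonempty_iff_eq_empty] at h
    have hsub : U ∩ O ⊆ {t' | y t' ∉ S t'} := fun x hx hxs =>
      Set.eq_empty_iff_forall_notMem.1 h x ⟨hx, hxs⟩
    exact absurd (le_antisymm (le_trans (measure_mono hsub) (le_of_eq hz)) zero_le) hμ.ne'
  obtain ⟨t', ⟨hU', _⟩, hS'⟩ := hmeet
  exact ⟨t', hUN hU', ⟨y t', subset_closure hS', hUA hU'⟩⟩
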